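/- Let q, a, b, c, d ∈ ℝ³ satisfy: ‖a‖ = ‖b‖ ≠ 0, a·b = 0, ‖c‖ = ‖d‖ ≠ 0, c·d = 0, q·a = q·b = q·c = q·d = 0, ‖q‖² = 2 (a·c + b·d), a·d − b·c = 0, and q ≠ 0. Then there exists a real number λ > 0 such that a = λ c and b = λ d. -/

import Mathlib

open scoped RealInnerProductSpace

/-- Corollary 1.6, catenoid case: under the conformal neck relations in `ℝ³` with
`q ≠ 0`, one has `a = λ c` and `b = λ d` for some `λ > 0`. -/
theorem neck_catenoid_case
    (q a b c d : EuclideanSpace ℝ (Fin 3))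
    (hab : ‖a‖ = ‖b‖) (ha : ‖a‖ ≠ 0) (habo : ⟪a, b⟫ = 0)
    (hcd : ‖c‖ = ‖d‖) (hc : ‖c‖ ≠ 0) (hcdo : ⟪c, d⟫ = 0)
    (hqa : ⟪q, a⟫ = 0) (hqb : ⟪q, b⟫ = 0) (hqc : ⟪q, c⟫ = 0) (hqd : ⟪q, d⟫ = 0)
    (hq : ‖q‖ ^ 2 = 2 * (⟪a, c⟫ + ⟪b, d⟫))
    (hdet : ⟪a, d⟫ - ⟪b, c⟫ = 0)
    (hqne : q ≠ 0) :
    ∃ lam : ℝ, 0 < lam ∧ a = lam • c ∧ b = lam • d := by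
  have hb : ‖b‖ ≠ 0 := hab ▸ ha
  have hqn : ‖q‖ ≠ 0 := norm_ne_zero_iff.mpr hqne
  have haq : ⟪a, q⟫ = 0 := by rw [real_inner_comm]; exact hqa
  have hbq : ⟪b, q⟫ = 0 := by rw [real_inner_comm]; exact hqb
  have hba : ⟪b, a⟫ = 0 := by rw [real_inner_comm]; exact habo
  set f : Fin 3 → EuclideanSpace ℝ (Fin 3) := ![‖q‖⁻¹ • q, ‖a‖⁻¹ • a, ‖b‖⁻¹ • b] with hf
  have hon : Orthonormal ℝ f := by
    rw [orthonormal_iff_ite]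
    intro i j
    fin_cases i <;> fin_cases j <;>
      simp only [hf, Fin.reduceFinMk, Fin.mk_zero, Fin.mk_one, Matrix.cons_val_zero,
        Matrix.cons_val_one, Matrix.head_cons, Matrix.cons_val_two, Matrix.tail_cons,
        Fin.isValue, real_inner_smul_left, real_inner_smul_right,
        real_inner_self_eq_norm_sq, hqa, hqb, hqc, hqd, haq, hbq, habo, hba,
        mul_zero, zero_mul] <;>
      simp only [Fin.reduceEq, if_true, if_false, reduceIte] <;>
      rw [norm_smul] <;>
      simp [Real.norm_eq_abs, abs_inv, abs_norm, inv_mul_cancel₀, hqn, ha, hb]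
  have hsp : Submodule.span ℝ (Set.range f) = ⊤ := by
    apply Submodule.eq_top_of_finrank_eq
    rw [finrank_span_eq_card hon.linearIndependent]
    simp [finrank_euclideanSpace]
  have key : ∀ v : EuclideanSpace ℝ (Fin 3), ⟪q, v⟫ = 0 →
      ∃ α β : ℝ, v = α • a + β • b := by
    intro v hv
    have hmem : v ∈ Submodule.span ℝ (Set.range f) := hsp ▸ Submodule.mem_top
    rw [Submodule.mem_span_range_iff_exists_fun] at hmem
    obtain ⟨l, hl⟩ := hmem
    have h0 : l 0 = 0 := by
      have := hon.inner_right_fintype l 0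
      rw [hl] at this
      have hq0 : ⟪f 0, v⟫ = ‖q‖⁻¹ * ⟪q, v⟫ := by
        simp only [hf, Matrix.cons_val_zero]; rw [real_inner_smul_left]
      rw [hq0, hv, mul_zero] at this
      exact this.symm
    refine ⟨l 1 * ‖a‖⁻¹, l 2 * ‖b‖⁻¹, ?_⟩
    rw [← hl, Fin.sum_univ_three, h0, zero_smul, zero_add]
    simp only [hf, Matrix.cons_val_one, Matrix.head_cons, Matrix.cons_val_two,
      Matrix.tail_cons, smul_smul, Matrix.cons_val_zero]
  obtain ⟨α, β, hcab⟩ := key c hqc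
  obtain ⟨γ, δ, hdab⟩ := key d hqd
  -- inner product computations
  have hk : (0:ℝ) < ‖a‖ ^ 2 := by positivity
  set k := ‖a‖ ^ 2 with hkdef
  have hbb : ⟪b, b⟫ = k := by rw [real_inner_self_eq_norm_sq, ← hab]
  have haa : ⟪a, a⟫ = k := real_inner_self_eq_norm_sq a
  have hac : ⟪a, c⟫ = α * k := by
    rw [hcab]; simp [inner_add_right, real_inner_smul_right, haa, habo, hkdef, hab, -PiLp.inner_apply]
  have hbc : ⟪b, c⟫ = β * k := by
    rw [hcab]; simp [inner_add_right, real_inner_smul_right, hbb, hba, hkdef, hab, -PiLp.inner_apply]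
  have had : ⟪a, d⟫ = γ * k := by
    rw [hdab]; simp [inner_add_right, real_inner_smul_right, haa, habo, hkdef, hab, -PiLp.inner_apply]
  have hbd : ⟪b, d⟫ = δ * k := by
    rw [hdab]; simp [inner_add_right, real_inner_smul_right, hbb, hba, hkdef, hab, -PiLp.inner_apply]
  have hcd2 : ⟪c, d⟫ = (α*γ + β*δ) * k := by
    rw [hcab, hdab]
    simp only [inner_add_left, inner_add_right, real_inner_smul_left, real_inner_smul_right,
      haa, hbb, habo, hba, mul_zero, add_zero, zero_add]
    ring
  have hcc : ‖c‖^2 = (α^2 + β^2) * k := by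
    rw [← real_inner_self_eq_norm_sq, hcab]
    simp only [inner_add_left, inner_add_right, real_inner_smul_left, real_inner_smul_right,
      haa, hbb, habo, hba, mul_zero, add_zero, zero_add]
    ring
  have hdd : ‖d‖^2 = (γ^2 + δ^2) * k := by
    rw [← real_inner_self_eq_norm_sq, hdab]
    simp only [inner_add_left, inner_add_right, real_inner_smul_left, real_inner_smul_right,
      haa, hbb, habo, hba, mul_zero, add_zero, zero_add]
    ring
  -- derive the algebraic relations
  have hk0 : k ≠ 0 := ne_of_gt hk
  have hγβ : γ = β := by
    rw [had, hbc] at hdet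
    exact mul_right_cancel₀ hk0 (by linarith)
  have hsumpos : 0 < α + δ := by
    have hqpos : (0:ℝ) < ‖q‖ ^ 2 := by positivity
    rw [hq, hac, hbd] at hqpos
    have h1 : 0 < (α + δ) * k := by linarith
    rcases mul_pos_iff.mp h1 with ⟨h2, _⟩ | ⟨_, h3⟩
    · exact h2
    · exact absurd h3 (not_lt.mpr hk.le)
  have hortho : β * (α + δ) = 0 := by
    rw [hcd2, hγβ] at hcdo
    have h2 : (β * (α + δ)) * k = 0 := by linear_combination hcdo
    rcases mul_eq_zero.mp h2 with h | h
    · exact h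
    · exact absurd h hk0
  have hβ : β = 0 := by
    rcases mul_eq_zero.mp hortho with h | h
    · exact h
    · exact absurd h (ne_of_gt hsumpos)
  have hnormeq : α^2 = δ^2 := by
    have : ‖c‖^2 = ‖d‖^2 := by rw [hcd]
    rw [hcc, hdd, hγβ, hβ] at this
    exact mul_right_cancel₀ hk0 (by linarith)
  have hαδ : α = δ := by
    have h3 : (α - δ) * (α + δ) = 0 := by linear_combination hnormeq
    rcases mul_eq_zero.mp h3 with h | h
    · linarith
    · exact absurd h (ne_of_gt hsumpos)
  have hαpos : 0 < α := by linarith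
  refine ⟨α⁻¹, by positivity, ?_, ?_⟩
  · rw [hcab, hβ, zero_smul, add_zero, smul_smul, inv_mul_cancel₀ (ne_of_gt hαpos), one_smul]
  · rw [hdab, hγβ, hβ, zero_smul, zero_add, smul_smul, ← hαδ,
      inv_mul_cancel₀ (ne_of_gt hαpos), one_smul]
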